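/- arXiv:0811.1236 — 5 statements merged into one kernel-verified Lean document; each statement's English description precedes it below -/
import Mathlib

section
/- The point (1,0,0,0) is at squared distance 1 from exactly 8 points of the D4 lattice, and no point of D4 is strictly closer to it. -/
/-- The deep hole (1,0,0,0) of the D4 lattice. -/
def hole1 : Fin 4 → ℚ := fun i => if i = 0 then 1 else 0

/-- The point (1,0,0,0) is at squared distance 1 from exactly 8 points of the
D4 lattice, and no point of D4 is strictly closer to it. -/
theorem d4_deep_hole_one :
    {v : Fin 4 → ℤ | Even (∑ i, v i) ∧ ∑ i, ((v i : ℚ) - hole1 i) ^ 2 = 1}.ncard = 8 ∧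
    ∀ v : Fin 4 → ℤ, Even (∑ i, v i) → 1 ≤ ∑ i, ((v i : ℚ) - hole1 i) ^ 2 := by
  have key : ∀ v : Fin 4 → ℤ, (∑ i, ((v i : ℚ) - hole1 i) ^ 2)
      = (((v 0 - 1) ^ 2 + (v 1) ^ 2 + (v 2) ^ 2 + (v 3) ^ 2 : ℤ) : ℚ) := by
    intro v
    rw [Fin.sum_univ_four]
    have h0 : hole1 0 = 1 := rfl
    have h1 : hole1 1 = 0 := rfl
    have h2 : hole1 2 = 0 := rfl
    have h3 : hole1 3 = 0 := rfl
    rw [h0, h1, h2, h3]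
    push_cast
    ring
  constructor
  · have hset : {v : Fin 4 → ℤ | Even (∑ i, v i) ∧ ∑ i, ((v i : ℚ) - hole1 i) ^ 2 = 1}
        = ↑({![0,0,0,0], ![2,0,0,0], ![1,1,0,0], ![1,-1,0,0], ![1,0,1,0], ![1,0,-1,0],
            ![1,0,0,1], ![1,0,0,-1]} : Finset (Fin 4 → ℤ)) := by
      ext v
      have eqv : ∀ (x y z w : ℤ), v = ![x,y,z,w] ↔ (v 0 = x ∧ v 1 = y ∧ v 2 = z ∧ v 3 = w) := by
        intro x y z w
        constructor
        · intro h
          refine ⟨by rw [h]; rfl, by rw [h]; rfl, by rw [h]; rfl, by rw [h]; rfl⟩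
        · rintro ⟨h0, h1, h2, h3⟩
          funext i
          fin_cases i <;> simpa [Matrix.cons_val_one, Matrix.head_cons]
      simp only [Set.mem_setOf_eq, Finset.coe_insert, Set.mem_insert_iff, Finset.coe_singleton,
        Set.mem_singleton_iff]
      rw [key v]
      simp only [eqv, Fin.sum_univ_four, Int.even_iff]
      constructor
      · rintro ⟨he, heq⟩
        have heq' : (v 0 - 1) ^ 2 + (v 1) ^ 2 + (v 2) ^ 2 + (v 3) ^ 2 = 1 := by exact_mod_cast heq
        have ha : 0 ≤ v 0 ∧ v 0 ≤ 2 := by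
          constructor <;> nlinarith [sq_nonneg (v 1), sq_nonneg (v 2), sq_nonneg (v 3)]
        have hb : -1 ≤ v 1 ∧ v 1 ≤ 1 := by
          constructor <;> nlinarith [sq_nonneg (v 0 - 1), sq_nonneg (v 2), sq_nonneg (v 3)]
        have hc : -1 ≤ v 2 ∧ v 2 ≤ 1 := by
          constructor <;> nlinarith [sq_nonneg (v 0 - 1), sq_nonneg (v 1), sq_nonneg (v 3)]
        have hd : -1 ≤ v 3 ∧ v 3 ≤ 1 := by
          constructor <;> nlinarith [sq_nonneg (v 0 - 1), sq_nonneg (v 1), sq_nonneg (v 2)]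
        obtain ⟨ha1, ha2⟩ := ha; obtain ⟨hb1, hb2⟩ := hb
        obtain ⟨hc1, hc2⟩ := hc; obtain ⟨hd1, hd2⟩ := hd
        set a := v 0; set b := v 1; set c := v 2; set d := v 3
        interval_cases a <;> interval_cases b <;> interval_cases c <;> interval_cases d <;> omega
      · rintro (⟨h0,h1,h2,h3⟩|⟨h0,h1,h2,h3⟩|⟨h0,h1,h2,h3⟩|⟨h0,h1,h2,h3⟩|⟨h0,h1,h2,h3⟩|
          ⟨h0,h1,h2,h3⟩|⟨h0,h1,h2,h3⟩|⟨h0,h1,h2,h3⟩) <;>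
          rw [h0, h1, h2, h3] <;> norm_num
    rw [hset, Set.ncard_coe_finset]
    decide
  · intro v he
    rw [key v]
    have hN : 1 ≤ (v 0 - 1) ^ 2 + (v 1) ^ 2 + (v 2) ^ 2 + (v 3) ^ 2 := by
      by_contra h
      push_neg at h
      have h0 : v 0 = 1 := by nlinarith [sq_nonneg (v 0 - 1), sq_nonneg (v 1), sq_nonneg (v 2), sq_nonneg (v 3)]
      have h1 : v 1 = 0 := by nlinarith [sq_nonneg (v 0 - 1), sq_nonneg (v 1), sq_nonneg (v 2), sq_nonneg (v 3)]
      have h2 : v 2 = 0 := by nlinarith [sq_nonneg (v 0 - 1), sq_nonneg (v 1), sq_nonneg (v 2), sq_nonneg (v 3)]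
      have h3 : v 3 = 0 := by nlinarith [sq_nonneg (v 0 - 1), sq_nonneg (v 1), sq_nonneg (v 2), sq_nonneg (v 3)]
      rw [Fin.sum_univ_four, h0, h1, h2, h3] at he
      rw [Int.even_iff] at he
      omega
    exact_mod_cast hN
end

section
/- The point (1/2,1/2,1/2,1/2) is at squared distance 1 from exactly 8 points of the D4 lattice, and at squared distance 3 from exactly 32 points of D4, with no points of D4 at any squared distance strictly between 1 and 3. -/
/-- The deep hole (1/2,1/2,1/2,1/2) of the D4 lattice. -/
def hole2 : Fin 4 → ℚ := fun _ => 1/2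

lemma sum_sq_eq (v : Fin 4 → ℤ) :
    ∑ i, ((v i : ℚ) - hole2 i) ^ 2 = ((∑ i, (2 * v i - 1) ^ 2 : ℤ) : ℚ) / 4 := by
  push_cast
  rw [Finset.sum_div]
  refine Finset.sum_congr rfl fun i _ => ?_
  simp only [hole2]
  ring

lemma cond_iff (v : Fin 4 → ℤ) (n : ℤ) :
    (∑ i, ((v i : ℚ) - hole2 i) ^ 2 = (n : ℚ)) ↔ ∑ i, (2 * v i - 1) ^ 2 = 4 * n := by
  rw [sum_sq_eq, div_eq_iff (by norm_num : (4:ℚ) ≠ 0)]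
  constructor
  · intro h; exact_mod_cast (by push_cast at h ⊢; linarith : ((∑ i, (2 * v i - 1) ^ 2 : ℤ) : ℚ) = 4 * n)
  · intro h; push_cast [h]; ring

lemma bound (v : Fin 4 → ℤ) (h : ∑ i, (2 * v i - 1) ^ 2 ≤ 12) (i : Fin 4) :
    -1 ≤ v i ∧ v i ≤ 2 := by
  have h1 : (2 * v i - 1) ^ 2 ≤ 12 :=
    le_trans (Finset.single_le_sum (fun j _ => sq_nonneg (2 * v j - 1)) (Finset.mem_univ i)) h
  constructor <;> nlinarith

/-- The point (1/2,1/2,1/2,1/2) is at squared distance 1 from exactly 8 points of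
the D4 lattice, at squared distance 3 from exactly 32 points of D4, and no point
of D4 lies at squared distance strictly between 1 and 3 from it. -/
theorem d4_deep_hole_half :
    {v : Fin 4 → ℤ | Even (∑ i, v i) ∧ ∑ i, ((v i : ℚ) - hole2 i) ^ 2 = 1}.ncard = 8 ∧
    {v : Fin 4 → ℤ | Even (∑ i, v i) ∧ ∑ i, ((v i : ℚ) - hole2 i) ^ 2 = 3}.ncard = 32 ∧
    ∀ v : Fin 4 → ℤ, Even (∑ i, v i) →
      ¬ (1 < ∑ i, ((v i : ℚ) - hole2 i) ^ 2 ∧ ∑ i, ((v i : ℚ) - hole2 i) ^ 2 < 3) := by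
  refine ⟨?_, ?_, ?_⟩
  · have hset : {v : Fin 4 → ℤ | Even (∑ i, v i) ∧ ∑ i, ((v i : ℚ) - hole2 i) ^ 2 = 1} =
        ↑((Fintype.piFinset fun _ : Fin 4 => Finset.Icc (-1 : ℤ) 2).filter
          (fun v => Even (∑ i, v i) ∧ ∑ i, (2 * v i - 1) ^ 2 = 4)) := by
      ext v
      simp only [Set.mem_setOf_eq, Finset.coe_filter, Fintype.mem_piFinset, Finset.mem_Icc,
        Set.mem_setOf_eq]
      constructor
      · rintro ⟨he, hs⟩
        have h4 : ∑ i, (2 * v i - 1) ^ 2 = 4 := by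
          have := (cond_iff v 1).mp (by exact_mod_cast hs); linarith
        exact ⟨fun i => bound v (by omega) i, he, h4⟩
      · rintro ⟨_, he, h4⟩
        exact ⟨he, by exact_mod_cast (cond_iff v 1).mpr (by linarith)⟩
    rw [hset, Set.ncard_coe_finset]
    decide
  · have hset : {v : Fin 4 → ℤ | Even (∑ i, v i) ∧ ∑ i, ((v i : ℚ) - hole2 i) ^ 2 = 3} =
        ↑((Fintype.piFinset fun _ : Fin 4 => Finset.Icc (-1 : ℤ) 2).filter
          (fun v => Even (∑ i, v i) ∧ ∑ i, (2 * v i - 1) ^ 2 = 12)) := by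
      ext v
      simp only [Set.mem_setOf_eq, Finset.coe_filter, Fintype.mem_piFinset, Finset.mem_Icc,
        Set.mem_setOf_eq]
      constructor
      · rintro ⟨he, hs⟩
        have h12 : ∑ i, (2 * v i - 1) ^ 2 = 12 := by
          have := (cond_iff v 3).mp (by exact_mod_cast hs); linarith
        exact ⟨fun i => bound v (by omega) i, he, h12⟩
      · rintro ⟨_, he, h12⟩
        exact ⟨he, by exact_mod_cast (cond_iff v 3).mpr (by linarith)⟩
    rw [hset, Set.ncard_coe_finset]
    decide
  · intro v _ ⟨h1, h3⟩
    rw [sum_sq_eq] at h1 h3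
    set S := ∑ i, (2 * v i - 1) ^ 2 with hS
    have hlt : 4 < S ∧ S < 12 := by
      constructor <;> [exact_mod_cast (by linarith : (4:ℚ) < (S:ℚ));
        exact_mod_cast (by linarith : (S:ℚ) < 12)]
    have hk : ∀ i : Fin 4, ∃ k : ℤ, (2 * v i - 1) ^ 2 = 8 * k + 1 := by
      intro i
      obtain ⟨k, hk⟩ := Int.even_mul_succ_self (v i - 1)
      exact ⟨k, by nlinarith⟩
    choose k hks using hk
    have : S = 8 * (∑ i, k i) + 4 := by
      rw [hS, Finset.sum_congr rfl fun i _ => hks i, Finset.sum_add_distrib,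
        ← Finset.mul_sum]
      simp
    omega
end

section
/- Let c: Z → {1,2,3,4} be a coloring with c(n) ≠ c(n+1) for all n, and suppose that for every n, c(n) ∉ {c(n+2), c(n-2), c(n+3), c(n-3)}. Then c is periodic of period 4 and uses each of the four colors exactly once in each period; i.e., up to a permutation of the colors, c(n) ≡ n (mod 4). -/
lemma fin4_eq_of_ne_three : ∀ a b d x y : Fin 4,
    a ≠ b → a ≠ d → b ≠ d → x ≠ a → x ≠ b → x ≠ d → y ≠ a → y ≠ b → y ≠ d → x = y := by
  decide

/-- In `ZMod 4`, two elements each distinct from three pairwise-distinct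
elements must be equal. -/
lemma zmod4_eq_of_ne_three : ∀ a b d x y : ZMod 4,
    a ≠ b → a ≠ d → b ≠ d → x ≠ a → x ≠ b → x ≠ d → y ≠ a → y ≠ b → y ≠ d → x = y :=
  fin4_eq_of_ne_three

/-- A proper 4-coloring of ℤ in which no two layers with the same color are at
distance 2 or 3 must be the cyclic coloring abcdabcd...: it is periodic of
period 4 and, up to a permutation of colors, c(n) ≡ n (mod 4). -/
theorem coloring_period_four_unique
    (c : ℤ → ZMod 4)
    (h1 : ∀ n, c n ≠ c (n + 1))
    (h2 : ∀ n, c n ≠ c (n + 2) ∧ c n ≠ c (n - 2) ∧ c n ≠ c (n + 3) ∧ c n ≠ c (n - 3)) :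
    (∀ n, c (n + 4) = c n) ∧
    ∃ σ : Equiv.Perm (ZMod 4), ∀ n : ℤ, c n = σ (n : ZMod 4) := by
  -- pairwise distinctness of four consecutive values
  have key : ∀ n : ℤ, c (n+1) ≠ c (n+2) ∧ c (n+1) ≠ c (n+3) ∧ c (n+2) ≠ c (n+3) ∧
      c n ≠ c (n+1) ∧ c n ≠ c (n+2) ∧ c n ≠ c (n+3) := by
    intro n
    have a1 := h1 (n+1)
    have a2 := (h2 (n+1)).1
    have a3 := h1 (n+2)
    refine ⟨by simpa [show (n:ℤ)+1+1 = n+2 from by ring] using a1,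
      by simpa [show (n:ℤ)+1+2 = n+3 from by ring] using a2,
      by simpa [show (n:ℤ)+2+1 = n+3 from by ring] using a3,
      h1 n, (h2 n).1, (h2 n).2.2.1⟩
  have per : ∀ n : ℤ, c (n + 4) = c n := by
    intro n
    obtain ⟨k1, k2, k3, k4, k5, k6⟩ := key n
    have b1 : c (n+4) ≠ c (n+3) := by
      have := h1 (n+3)
      simpa [show (n:ℤ)+3+1 = n+4 from by ring, ne_comm] using this
    have b2 : c (n+4) ≠ c (n+2) := by
      have := (h2 (n+4)).2.1
      simpa [show (n:ℤ)+4-2 = n+2 from by ring] using this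
    have b3 : c (n+4) ≠ c (n+1) := by
      have := (h2 (n+4)).2.2.2
      simpa [show (n:ℤ)+4-3 = n+1 from by ring] using this
    exact zmod4_eq_of_ne_three (c (n+1)) (c (n+2)) (c (n+3)) _ _ k1 k2 k3 b3 b2 b1 k4 k5 k6
  refine ⟨per, ?_⟩
  -- c depends only on n mod 4
  have shift : ∀ (k : ℤ) (n : ℤ), c (n + 4 * k) = c n := by
    intro k
    induction k using Int.induction_on with
    | zero => simp
    | succ k ih =>
        intro n
        have h := per (n + 4 * k)
        have e : n + 4 * ((k : ℤ) + 1) = (n + 4 * k) + 4 := by ring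
        rw [e, h, ih]
    | pred k ih =>
        intro n
        have h := per (n + 4 * (-(k : ℤ) - 1))
        have e : n + 4 * (-(k : ℤ) - 1) + 4 = n + 4 * (-(k : ℤ)) := by ring
        rw [e] at h
        rw [← h, ih]
  have congr4 : ∀ m n : ℤ, (m : ZMod 4) = (n : ZMod 4) → c m = c n := by
    intro m n h
    have hd : (4 : ℤ) ∣ m - n := by
      have : ((m - n : ℤ) : ZMod 4) = 0 := by push_cast; rw [h]; ring
      exact (ZMod.intCast_zmod_eq_zero_iff_dvd _ 4).mp this
    obtain ⟨k, hk⟩ := hd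
    have hm : m = n + 4 * k := by omega
    rw [hm, shift]
  set f : ZMod 4 → ZMod 4 := fun x => c (x.val : ℤ) with hf
  have hfc : ∀ n : ℤ, c n = f ((n : ZMod 4)) := by
    intro n
    apply congr4
    push_cast [ZMod.natCast_val, ZMod.cast_id]
    rfl
  have finj : Function.Injective f := by
    obtain ⟨k1, k2, k3, k4, k5, k6⟩ := key 0
    norm_num at k1 k2 k3 k4 k5 k6
    intro x y hxy
    fin_cases x <;> fin_cases y <;> simp only [f, ZMod.val] at hxy <;>
      norm_num at hxy ⊢ <;> tauto
  refine ⟨Equiv.ofBijective f ((Finite.injective_iff_bijective).mp finj), fun n => ?_⟩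
  rw [hfc n]
  rfl
end

section
/- Consider the triangular lattice A2 = {m·(1,0) + n·(1/2, √3/2) : m, n ∈ Z} (minimal distance 1). A coloring c: A2 → {1,2,3,4} assigns different colors to points at distance 1. Suppose additionally that no two points at distance √3 receive the same color. Then such a coloring exists, and it is unique up to a permutation of the four colors and up to the symmetry exchanging the two sublattice-pattern choices; explicitly, in coordinates (m,n), one valid coloring is c(m,n) determined by (m mod 2, n mod 2) via a bijection with the four colors. -/
/-- The norm form of the triangular lattice A2 in coordinates (m,n):
the squared Euclidean distance between lattice points with coordinate
difference (m,n) is m² + mn + n². -/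
def A2norm : ℤ × ℤ → ℤ := fun p => p.1 ^ 2 + p.1 * p.2 + p.2 ^ 2

/-- The E6 coloring of A2, determined by (m mod 2, n mod 2). -/
def e6Coloring : ℤ × ℤ → Fin 4 :=
  fun p => ⟨(p.1 % 2 + 2 * (p.2 % 2)).toNat, by omega⟩

set_option synthInstance.maxSize 400 in
set_option maxHeartbeats 1000000 in
lemma fin4_key : ∀ X A B D U P : Fin 4, A ≠ X → B ≠ X → D ≠ X → B ≠ A → D ≠ A →
    U ≠ A → U ≠ B → U ≠ D → P ≠ X → P ≠ A → P ≠ B → P ≠ U → U = X := by decide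

lemma norm_calc (a b c d : ℤ) : A2norm ((a,b) - (c,d)) = (a-c)^2 + (a-c)*(b-d) + (b-d)^2 := by
  simp [A2norm, Prod.mk_sub_mk]

lemma period1 (c : ℤ × ℤ → Fin 4)
    (h1 : ∀ x y : ℤ × ℤ, A2norm (x - y) = 1 → c x ≠ c y)
    (h3 : ∀ x y : ℤ × ℤ, A2norm (x - y) = 3 → c x ≠ c y) :
    ∀ m n : ℤ, c (m + 2, n) = c (m, n) := by
  intro m n
  apply fin4_key (c (m,n)) (c (m+1,n)) (c (m+1,n+1)) (c (m+1,n-1)) (c (m+2,n)) (c (m,n+1))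
  · exact h1 _ _ (by rw [norm_calc]; ring)
  · exact h3 _ _ (by rw [norm_calc]; ring)
  · exact h1 _ _ (by rw [norm_calc]; ring)
  · exact h1 _ _ (by rw [norm_calc]; ring)
  · exact h1 _ _ (by rw [norm_calc]; ring)
  · exact h1 _ _ (by rw [norm_calc]; ring)
  · exact h1 _ _ (by rw [norm_calc]; ring)
  · exact h3 _ _ (by rw [norm_calc]; ring)
  · exact h1 _ _ (by rw [norm_calc]; ring)
  · exact h1 _ _ (by rw [norm_calc]; ring)
  · exact h1 _ _ (by rw [norm_calc]; ring)
  · exact h3 _ _ (by rw [norm_calc]; ring)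

lemma A2norm_swap (p : ℤ × ℤ) : A2norm (p.2, p.1) = A2norm p := by
  simp [A2norm]; ring

lemma period2 (c : ℤ × ℤ → Fin 4)
    (h1 : ∀ x y : ℤ × ℤ, A2norm (x - y) = 1 → c x ≠ c y)
    (h3 : ∀ x y : ℤ × ℤ, A2norm (x - y) = 3 → c x ≠ c y) :
    ∀ m n : ℤ, c (m, n + 2) = c (m, n) := by
  intro m n
  have key := period1 (fun p => c (p.2, p.1))
    (fun x y h => h1 (x.2, x.1) (y.2, y.1) (by
      rw [show (x.2, x.1) - (y.2, y.1) = ((x - y).2, (x - y).1) from rfl, A2norm_swap]; exact h))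
    (fun x y h => h3 (x.2, x.1) (y.2, y.1) (by
      rw [show (x.2, x.1) - (y.2, y.1) = ((x - y).2, (x - y).1) from rfl, A2norm_swap]; exact h))
    n m
  exact key

lemma shift1 (c : ℤ × ℤ → Fin 4)
    (h1 : ∀ x y : ℤ × ℤ, A2norm (x - y) = 1 → c x ≠ c y)
    (h3 : ∀ x y : ℤ × ℤ, A2norm (x - y) = 3 → c x ≠ c y) :
    ∀ (m n k : ℤ), c (m + 2 * k, n) = c (m, n) := by
  intro m n k
  induction k using Int.induction_on with
  | zero => simp
  | succ k ih =>
      have h := period1 c h1 h3 (m + 2 * k) n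
      have e : m + 2 * ((k : ℤ) + 1) = m + 2 * k + 2 := by ring
      rw [e, h, ih]
  | pred k ih =>
      have h := period1 c h1 h3 (m + 2 * (-(k : ℤ) - 1)) n
      have e : m + 2 * (-(k : ℤ) - 1) + 2 = m + 2 * (-(k : ℤ)) := by ring
      rw [e] at h
      rw [← h, ih]

lemma shift2 (c : ℤ × ℤ → Fin 4)
    (h1 : ∀ x y : ℤ × ℤ, A2norm (x - y) = 1 → c x ≠ c y)
    (h3 : ∀ x y : ℤ × ℤ, A2norm (x - y) = 3 → c x ≠ c y) :
    ∀ (m n k : ℤ), c (m, n + 2 * k) = c (m, n) := by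
  intro m n k
  induction k using Int.induction_on with
  | zero => simp
  | succ k ih =>
      have h := period2 c h1 h3 m (n + 2 * k)
      have e : n + 2 * ((k : ℤ) + 1) = n + 2 * k + 2 := by ring
      rw [e, h, ih]
  | pred k ih =>
      have h := period2 c h1 h3 m (n + 2 * (-(k : ℤ) - 1))
      have e : n + 2 * (-(k : ℤ) - 1) + 2 = n + 2 * (-(k : ℤ)) := by ring
      rw [e] at h
      rw [← h, ih]

lemma mod_key (c : ℤ × ℤ → Fin 4)
    (h1 : ∀ x y : ℤ × ℤ, A2norm (x - y) = 1 → c x ≠ c y)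
    (h3 : ∀ x y : ℤ × ℤ, A2norm (x - y) = 3 → c x ≠ c y) :
    ∀ m n : ℤ, c (m, n) = c (m % 2, n % 2) := by
  intro m n
  have e1 : m = m % 2 + 2 * (m / 2) := by omega
  have e2 : n = n % 2 + 2 * (n / 2) := by omega
  calc c (m, n) = c (m % 2 + 2 * (m / 2), n) := by rw [← e1]
    _ = c (m % 2, n) := shift1 c h1 h3 _ _ _
    _ = c (m % 2, n % 2 + 2 * (n / 2)) := by rw [← e2]
    _ = c (m % 2, n % 2) := shift2 c h1 h3 _ _ _

lemma inj4 {α : Type*} (a b c d : α) (h1 : b ≠ a) (h2 : c ≠ a) (h3 : d ≠ a)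
    (h4 : c ≠ b) (h5 : d ≠ b) (h6 : d ≠ c) : Function.Injective ![a, b, c, d] := by
  intro i j hij
  fin_cases i <;> fin_cases j <;> simp_all

/-- There is a 4-coloring of the triangular lattice A2 in which points at
distance 1 get distinct colors and points at distance √3 get distinct colors,
namely the coloring determined by (m mod 2, n mod 2); and it is unique up to a
permutation of the four colors and the symmetry exchanging the two
sublattice-pattern choices. -/
theorem e6_coloring_exists_unique :
    ((∀ x y : ℤ × ℤ, A2norm (x - y) = 1 → e6Coloring x ≠ e6Coloring y) ∧
     (∀ x y : ℤ × ℤ, A2norm (x - y) = 3 → e6Coloring x ≠ e6Coloring y)) ∧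
    ∀ c : ℤ × ℤ → Fin 4,
      (∀ x y : ℤ × ℤ, A2norm (x - y) = 1 → c x ≠ c y) →
      (∀ x y : ℤ × ℤ, A2norm (x - y) = 3 → c x ≠ c y) →
      ∃ σ : Equiv.Perm (Fin 4),
        (∀ x : ℤ × ℤ, c x = σ (e6Coloring x)) ∨
        (∀ x : ℤ × ℤ, c x = σ (e6Coloring (x.2, x.1))) := by
  have even_norm : ∀ x y : ℤ × ℤ, e6Coloring x = e6Coloring y →
      ∀ v : ℤ, A2norm (x - y) ≠ 4 * v + 1 ∧ A2norm (x - y) ≠ 4 * v + 3 := by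
    intro x y h v
    have hmod : x.1 % 2 = y.1 % 2 ∧ x.2 % 2 = y.2 % 2 := by
      simp only [e6Coloring, Fin.mk.injEq] at h
      omega
    obtain ⟨s, hs⟩ : ∃ s, x.1 - y.1 = 2 * s := ⟨(x.1 - y.1) / 2, by omega⟩
    obtain ⟨t, ht⟩ : ∃ t, x.2 - y.2 = 2 * t := ⟨(x.2 - y.2) / 2, by omega⟩
    have : A2norm (x - y) = 4 * (s ^ 2 + s * t + t ^ 2) := by
      show (x.1 - y.1) ^ 2 + (x.1 - y.1) * (x.2 - y.2) + (x.2 - y.2) ^ 2 = _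
      rw [hs, ht]; ring
    rw [this]
    constructor <;> omega
  refine ⟨⟨?_, ?_⟩, ?_⟩
  · intro x y hn heq
    exact (even_norm x y heq 0).1 (by omega)
  · intro x y hn heq
    exact (even_norm x y heq 0).2 (by omega)
  · intro c h1 h3
    have d1 : c (1,0) ≠ c (0,0) := h1 _ _ (by rw [norm_calc]; ring)
    have d2 : c (0,1) ≠ c (0,0) := h1 _ _ (by rw [norm_calc]; ring)
    have d3 : c (1,1) ≠ c (0,0) := h3 _ _ (by rw [norm_calc]; ring)
    have d4 : c (0,1) ≠ c (1,0) := h1 _ _ (by rw [norm_calc]; ring)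
    have d5 : c (1,1) ≠ c (1,0) := h1 _ _ (by rw [norm_calc]; ring)
    have d6 : c (1,1) ≠ c (0,1) := h1 _ _ (by rw [norm_calc]; ring)
    set f : Fin 4 → Fin 4 := ![c (0,0), c (1,0), c (0,1), c (1,1)] with hf
    have hinj : Function.Injective f := inj4 _ _ _ _ d1 d2 d3 d4 d5 d6
    refine ⟨Equiv.ofBijective f (Finite.injective_iff_bijective.mp hinj), Or.inl ?_⟩
    intro x
    have hx : c x = c (x.1 % 2, x.2 % 2) := by
      have := mod_key c h1 h3 x.1 x.2
      rwa [show ((x.1, x.2) : ℤ × ℤ) = x from rfl] at this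
    have hσ : ∀ i, (Equiv.ofBijective f (Finite.injective_iff_bijective.mp hinj)) i = f i :=
      fun i => rfl
    rw [hσ, hx]
    have hm : x.1 % 2 = 0 ∨ x.1 % 2 = 1 := by omega
    have hn : x.2 % 2 = 0 ∨ x.2 % 2 = 1 := by omega
    rcases hm with hm | hm <;> rcases hn with hn | hn <;>
      · rw [hm, hn]
        have : e6Coloring x = ⟨(x.1 % 2 + 2 * (x.2 % 2)).toNat, by omega⟩ := rfl
        rw [this]
        simp only [hm, hn, hf]
        rfl
end

section
/- Let c: A2 → {1,2,3,4} be a proper coloring of the triangular lattice (points at distance 1 get distinct colors). If c has no monochromatic pair at distance √3, then for any point x colored a, the six neighbors of x at distance 1 are colored in cyclic order b,c,d,b,c,d for some labeling {b,c,d} = {1,2,3,4}∖{a}. -/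
/-- The six neighbors of the origin in A2, in cyclic (hexagonal) order. -/
def hexNbr : Fin 6 → ℤ × ℤ := ![(1, 0), (0, 1), (-1, 1), (-1, 0), (0, -1), (1, -1)]

lemma fin4_key_s14 : ∀ p q r s t : Fin 4, p ≠ q → p ≠ r → p ≠ s → q ≠ r → q ≠ s → r ≠ s →
    t ≠ p → t ≠ q → t ≠ r → t = s := by
  intro p q r s t hpq hpr hps hqr hqs hrs htp htq htr
  have := p.isLt; have := q.isLt; have := r.isLt; have := s.isLt; have := t.isLt
  have h : ∀ a b : Fin 4, a ≠ b → a.val ≠ b.val := fun a b h => Fin.val_ne_of_ne h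
  have : t.val = s.val := by
    have := h _ _ hpq; have := h _ _ hpr; have := h _ _ hps; have := h _ _ hqr
    have := h _ _ hqs; have := h _ _ hrs; have := h _ _ htp; have := h _ _ htq
    have := h _ _ htr; omega
  exact Fin.ext this

/-- If a proper 4-coloring of A2 has no monochromatic pair at distance √3, then
around any point colored a, the six neighbors at distance 1 are colored in
cyclic order b,c,d,b,c,d with {b,c,d} the three colors other than a. -/
theorem e6_coloring_local_hexagon
    (c : ℤ × ℤ → Fin 4)
    (h1 : ∀ x y : ℤ × ℤ, A2norm (x - y) = 1 → c x ≠ c y)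
    (h3 : ∀ x y : ℤ × ℤ, A2norm (x - y) = 3 → c x ≠ c y) :
    ∀ x : ℤ × ℤ, ∀ i : Fin 6,
      c (x + hexNbr i) ≠ c x ∧
      c (x + hexNbr (i + 3)) = c (x + hexNbr i) ∧
      c (x + hexNbr (i + 1)) ≠ c (x + hexNbr i) ∧
      c (x + hexNbr (i + 2)) ≠ c (x + hexNbr i) := by
  intro x i
  have hn : ∀ j k : Fin 6, ∀ v : ℤ, A2norm (hexNbr j - hexNbr k) = v →
      A2norm ((x + hexNbr j) - (x + hexNbr k)) = v := by
    intro j k v h; rwa [add_sub_add_left_eq_sub]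
  have f1 : ∀ j : Fin 6, A2norm (hexNbr j) = 1 := by decide
  have fB : ∀ j : Fin 6, A2norm (hexNbr (j + 1) - hexNbr j) = 1 := by decide
  have fC : ∀ j : Fin 6, A2norm (hexNbr (j + 2) - hexNbr j) = 3 := by decide
  have hx : ∀ j : Fin 6, c (x + hexNbr j) ≠ c x := fun j =>
    h1 _ _ (by rw [add_sub_cancel_left]; exact f1 j)
  have adj : ∀ j : Fin 6, c (x + hexNbr (j + 1)) ≠ c (x + hexNbr j) := fun j =>
    h1 _ _ (hn _ _ _ (fB j))
  have skip : ∀ j : Fin 6, c (x + hexNbr (j + 2)) ≠ c (x + hexNbr j) := fun j =>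
    h3 _ _ (hn _ _ _ (fC j))
  have e12 : i + 1 + 2 = i + 3 := by rw [add_assoc]; rfl
  have e21 : i + 2 + 1 = i + 3 := by rw [add_assoc]; rfl
  have e11 : i + 1 + 1 = i + 2 := by rw [add_assoc]; rfl
  refine ⟨hx i, ?_, adj i, skip i⟩
  refine fin4_key_s14 (c x) (c (x + hexNbr (i + 1))) (c (x + hexNbr (i + 2)))
    (c (x + hexNbr i)) (c (x + hexNbr (i + 3)))
    (hx (i + 1)).symm (hx (i + 2)).symm (hx i).symm
    (Ne.symm (by have := adj (i + 1); rwa [e11] at this))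
    (adj i) (skip i) (hx (i + 3))
    (by have := skip (i + 1); rwa [e12] at this)
    (by have := adj (i + 2); rwa [e21] at this)
end
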